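/- A polynomial with Newton polygon the quadrangle Δ₄ = conv{(0,0),(0,1),(1,1),(2,0)}, with coefficients c_{00}, c_{01}, c_{11}, c_{20} ∈ ℂ* at the vertices, defines a curve having a node on the toric divisor Tor([(0,0),(2,0)]) if and only if c_{00} c_{11}² = c_{01}² c_{20}. Moreover, for fixed vertex coefficients satisfying this relation, such a polynomial is unique and the corresponding curve has this node as its only singularity. -/

import Mathlib

/-- Second derivative of `F` at `z` as a bilinear expression. -/
noncomputable def D2 (F : ℂ × ℂ → ℂ) (z v w : ℂ × ℂ) : ℂ :=
  iteratedFDeriv ℂ 2 F z ![v, w]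

/-- Third derivative of `F` at `z` as a trilinear expression. -/
noncomputable def D3 (F : ℂ × ℂ → ℂ) (z v w u : ℂ × ℂ) : ℂ :=
  iteratedFDeriv ℂ 3 F z ![v, w, u]

/-- `z` is a singular point of the plane curve `{F = 0}`. -/
def IsSingularAt (F : ℂ × ℂ → ℂ) (z : ℂ × ℂ) : Prop :=
  F z = 0 ∧ fderiv ℂ F z = 0

/-- `z` is a node (A₁ singularity) of `{F = 0}`: a singular point with nondegenerate
Hessian. -/
def IsNode (F : ℂ × ℂ → ℂ) (z : ℂ × ℂ) : Prop :=
  IsSingularAt F z ∧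
    D2 F z (1, 0) (1, 0) * D2 F z (0, 1) (0, 1) - D2 F z (1, 0) (0, 1) ^ 2 ≠ 0

/-- `z` is an ordinary cusp (A₂ singularity) of `{F = 0}`: a singular point whose Hessian
has rank one, with nonvanishing third derivative along the kernel direction. -/
def IsOrdinaryCusp (F : ℂ × ℂ → ℂ) (z : ℂ × ℂ) : Prop :=
  IsSingularAt F z ∧ iteratedFDeriv ℂ 2 F z ≠ 0 ∧
    ∃ v : ℂ × ℂ, v ≠ 0 ∧ (∀ w : ℂ × ℂ, D2 F z v w = 0) ∧ D3 F z v v v ≠ 0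

/-- The polynomial with Newton polygon Δ₄ = conv{(0,0),(0,1),(1,1),(2,0)}, vertex
coefficients c₀₀, c₀₁, c₁₁, c₂₀ and edge coefficient c₁₀. -/
def quadPoly' (c00 c01 c11 c20 c10 : ℂ) : ℂ × ℂ → ℂ := fun z =>
  c00 + c10 * z.1 + c20 * z.1 ^ 2 + c01 * z.2 + c11 * z.1 * z.2

/-! ### Auxiliary derivative computations -/

noncomputable def e1 : ℂ × ℂ →L[ℂ] ℂ := ContinuousLinearMap.fst ℂ ℂ ℂ
noncomputable def e2 : ℂ × ℂ →L[ℂ] ℂ := ContinuousLinearMap.snd ℂ ℂ ℂ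

noncomputable def Lq (c10 c20 c01 c11 : ℂ) (z : ℂ × ℂ) : ℂ × ℂ →L[ℂ] ℂ :=
  (c10 + 2*c20*z.1 + c11*z.2) • e1 + (c01 + c11*z.1) • e2

lemma quad_hasFDerivAt (c00 c01 c11 c20 c10 : ℂ) (z : ℂ × ℂ) :
    HasFDerivAt (quadPoly' c00 c01 c11 c20 c10) (Lq c10 c20 c01 c11 z) z := by
  have h1 : HasFDerivAt (fun z : ℂ × ℂ => z.1) e1 z := hasFDerivAt_fst
  have h2 : HasFDerivAt (fun z : ℂ × ℂ => z.2) e2 z := hasFDerivAt_snd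
  have h := ((((hasFDerivAt_const c00 z).add (h1.const_mul c10)).add
      ((h1.mul h1).const_mul c20)).add (h2.const_mul c01)).add
      ((h1.mul h2).const_mul c11)
  have hfun : quadPoly' c00 c01 c11 c20 c10
      = fun z : ℂ × ℂ => c00 + c10 * z.1 + c20 * (z.1 * z.1) + c01 * z.2 + c11 * (z.1 * z.2) := by
    funext z; simp [quadPoly']; ring
  rw [hfun]
  exact h.congr_fderiv (by ext v <;> simp [Lq, e1, e2] <;> ring)

lemma quad_fderiv (c00 c01 c11 c20 c10 : ℂ) (z : ℂ × ℂ) :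
    fderiv ℂ (quadPoly' c00 c01 c11 c20 c10) z = Lq c10 c20 c01 c11 z :=
  (quad_hasFDerivAt c00 c01 c11 c20 c10 z).fderiv

lemma Lq_apply (c10 c20 c01 c11 : ℂ) (z v : ℂ × ℂ) :
    Lq c10 c20 c01 c11 z v = (c10 + 2*c20*z.1 + c11*z.2) * v.1 + (c01 + c11*z.1) * v.2 := by
  simp [Lq, e1, e2]

lemma quad_D2 (c00 c01 c11 c20 c10 : ℂ) (z v w : ℂ × ℂ) :
    D2 (quadPoly' c00 c01 c11 c20 c10) z v w
      = 2*c20*v.1*w.1 + c11*v.1*w.2 + c11*v.2*w.1 := by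
  have ha : HasFDerivAt (fun z : ℂ × ℂ => c10 + 2*c20*z.1 + c11*z.2)
      ((2*c20) • e1 + c11 • e2) z := by
    have h := ((hasFDerivAt_const (c10) z).add
        ((hasFDerivAt_fst : HasFDerivAt (fun z : ℂ × ℂ => z.1) e1 z).const_mul (2*c20))).add
      ((hasFDerivAt_snd : HasFDerivAt (fun z : ℂ × ℂ => z.2) e2 z).const_mul c11)
    exact h.congr_fderiv (by ext v <;> simp [e1, e2])
  have hb : HasFDerivAt (fun z : ℂ × ℂ => c01 + c11*z.1) (c11 • e1) z := by
    have h := (hasFDerivAt_const (c01) z).add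
      ((hasFDerivAt_fst : HasFDerivAt (fun z : ℂ × ℂ => z.1) e1 z).const_mul c11)
    exact h.congr_fderiv (by ext v <;> simp [e1, e2])
  have hM : HasFDerivAt (fun z => Lq c10 c20 c01 c11 z)
      (((2*c20) • e1 + c11 • e2).smulRight e1 + (c11 • e1).smulRight e2) z :=
    (ha.smul_const e1).add (hb.smul_const e2)
  have hf : fderiv ℂ (quadPoly' c00 c01 c11 c20 c10) = fun z => Lq c10 c20 c01 c11 z :=
    funext fun z => quad_fderiv c00 c01 c11 c20 c10 z
  rw [D2, iteratedFDeriv_two_apply, hf, hM.fderiv]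
  show (((2*c20) • e1 + c11 • e2).smulRight e1 + (c11 • e1).smulRight e2) v w = _
  simp [e1, e2]
  ring

lemma quad_sing_iff (c00 c01 c11 c20 c10 : ℂ) (w : ℂ × ℂ) :
    IsSingularAt (quadPoly' c00 c01 c11 c20 c10) w ↔
      (c00 + c10*w.1 + c20*w.1^2 + c01*w.2 + c11*w.1*w.2 = 0 ∧
       c10 + 2*c20*w.1 + c11*w.2 = 0 ∧ c01 + c11*w.1 = 0) := by
  constructor
  · rintro ⟨hF, hD⟩
    rw [quad_fderiv] at hD
    have h1 := ContinuousLinearMap.ext_iff.mp hD (1, 0)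
    have h2 := ContinuousLinearMap.ext_iff.mp hD (0, 1)
    rw [Lq_apply] at h1 h2
    simp at h1 h2
    exact ⟨hF, h1, h2⟩
  · rintro ⟨hF, ha, hb⟩
    refine ⟨hF, ?_⟩
    rw [quad_fderiv]
    refine ContinuousLinearMap.ext fun v => ?_
    rw [Lq_apply, ha, hb]
    simp

lemma quad_hess (c00 c01 c11 c20 c10 : ℂ) (h11 : c11 ≠ 0) (z : ℂ × ℂ) :
    D2 (quadPoly' c00 c01 c11 c20 c10) z (1, 0) (1, 0)
        * D2 (quadPoly' c00 c01 c11 c20 c10) z (0, 1) (0, 1)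
      - D2 (quadPoly' c00 c01 c11 c20 c10) z (1, 0) (0, 1) ^ 2 ≠ 0 := by
  rw [quad_D2, quad_D2, quad_D2]
  simp
  exact h11

/-- a polynomial with Newton polygon Δ₄ and vertex coefficients
c₀₀, c₀₁, c₁₁, c₂₀ ∈ ℂ* defines a curve with a node on the toric divisor
Tor([(0,0),(2,0)]) = {y = 0} iff c₀₀c₁₁² = c₀₁²c₂₀; moreover the remaining coefficient is
then unique and this node is the only singularity. -/
theorem node_on_divisor_condition_quadrangle
    (c00 c01 c11 c20 : ℂ) (h00 : c00 ≠ 0) (h01 : c01 ≠ 0) (h11 : c11 ≠ 0) (h20 : c20 ≠ 0) :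
    ((∃ c10 : ℂ, ∃ z : ℂ × ℂ, z.1 ≠ 0 ∧ z.2 = 0 ∧
        IsNode (quadPoly' c00 c01 c11 c20 c10) z)
      ↔ c00 * c11 ^ 2 = c01 ^ 2 * c20) ∧
    (c00 * c11 ^ 2 = c01 ^ 2 * c20 →
      ∃! c10 : ℂ, ∃ z : ℂ × ℂ, z.1 ≠ 0 ∧ z.2 = 0 ∧
        IsNode (quadPoly' c00 c01 c11 c20 c10) z) ∧
    (∀ c10 : ℂ, ∀ z : ℂ × ℂ, z.1 ≠ 0 ∧ z.2 = 0 ∧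
        IsNode (quadPoly' c00 c01 c11 c20 c10) z →
      ∀ w : ℂ × ℂ, w.1 ≠ 0 →
        IsSingularAt (quadPoly' c00 c01 c11 c20 c10) w → w = z) := by
  -- the canonical node data
  have hx0 : (-c01 / c11 : ℂ) ≠ 0 := by
    simp [div_eq_zero_iff, h01, h11]
  have hexists : c00 * c11 ^ 2 = c01 ^ 2 * c20 →
      ∃ z : ℂ × ℂ, z.1 ≠ 0 ∧ z.2 = 0 ∧
        IsNode (quadPoly' c00 c01 c11 c20 (2 * c20 * c01 / c11)) z := by
    intro hrel
    refine ⟨(-c01 / c11, 0), hx0, rfl, ⟨?_, quad_hess _ _ _ _ _ h11 _⟩⟩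
    rw [quad_sing_iff]
    refine ⟨?_, ?_, ?_⟩
    · field_simp
      linear_combination hrel
    · field_simp
      ring
    · field_simp
      ring
  -- from a node on the divisor, extract the equations
  have hextract : ∀ c10 : ℂ, ∀ z : ℂ × ℂ, z.1 ≠ 0 → z.2 = 0 →
      IsSingularAt (quadPoly' c00 c01 c11 c20 c10) z →
      z.1 = -c01 / c11 ∧ c10 = 2 * c20 * c01 / c11 ∧ c00 * c11 ^ 2 = c01 ^ 2 * c20 := by
    intro c10 z hz1 hz2 hs
    rw [quad_sing_iff] at hs
    obtain ⟨hF, ha, hb⟩ := hs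
    rw [hz2] at hF ha
    simp at hF ha
    have hx : z.1 = -c01 / c11 := by
      field_simp
      linear_combination hb
    refine ⟨hx, ?_, ?_⟩
    · rw [hx] at ha
      field_simp at ha
      field_simp
      linear_combination ha
    · linear_combination c11 ^ 2 * hF - c11 ^ 2 * z.1 * ha + c20 * (c11 * z.1 - c01) * hb
  refine ⟨⟨?_, ?_⟩, ?_, ?_⟩
  · rintro ⟨c10, z, hz1, hz2, ⟨hs, _⟩⟩
    exact (hextract c10 z hz1 hz2 hs).2.2
  · intro hrel
    exact ⟨2 * c20 * c01 / c11, hexists hrel⟩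
  · intro hrel
    refine ⟨2 * c20 * c01 / c11, hexists hrel, ?_⟩
    rintro c10 ⟨z, hz1, hz2, ⟨hs, _⟩⟩
    exact (hextract c10 z hz1 hz2 hs).2.1
  · rintro c10 z ⟨hz1, hz2, ⟨hs, _⟩⟩ w hw1 hsw
    obtain ⟨hxz, hc10, _⟩ := hextract c10 z hz1 hz2 hs
    rw [quad_sing_iff] at hsw
    obtain ⟨_, haw, hbw⟩ := hsw
    have hxw : w.1 = -c01 / c11 := by
      field_simp
      linear_combination hbw
    have hw2 : w.2 = 0 := by
      rw [hxw, hc10] at haw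
      field_simp at haw
      have haw : c11 * w.2 = 0 := mul_left_cancel₀ h11 (by linear_combination haw)
      rcases mul_eq_zero.mp haw with h | h
      · exact absurd h h11
      · exact h
    exact Prod.ext (by rw [hxw, hxz]) (by rw [hw2, hz2])
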